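/- With the above construction, let j ∈ {1,…,T−1}, let 1 ≤ i and let h satisfy i + 2 ≤ h ≤ T − 1, let q ∈ Q, let a_i,…,a_T ∈ Γ, and let u < B^T be a natural number all of whose base-B digits are at most (s+1)·k. Set W' = (Σ_{r=i, r≠h}^{T} g(a_r)·B^{T−r} + (f(q)·k + g(a_h))·B^{T−h})·B^{(T−j)·T} + u·B^{(T−j−1)·T}. Then c_copy(a_i, i, j) ≤ W', and c_copy(a_i, i, j) is the largest coin in 𝒞 not exceeding W'; hence it is the coin selected by the greedy procedure at remaining amount W'. -/
import Mathlib


/-- A deterministic single-tape Turing machine with a left endmarker `dollar` and a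
blank symbol `blank`.  In the transition function, the direction `true` means the head
moves one cell to the right and `false` means one cell to the left. -/
structure TM (Q Γ : Type*) where
  δ : Q → Γ → Q × Γ × Bool
  q₀ : Q
  qacc : Q
  qrej : Q
  dollar : Γ
  blank : Γ

namespace TM

variable {Q Γ : Type*} [DecidableEq Q] [DecidableEq Γ]

/-- `q` is a halting state. -/
def Halting (M : TM Q Γ) (q : Q) : Prop := q = M.qacc ∨ q = M.qrej

instance (M : TM Q Γ) (q : Q) : Decidable (M.Halting q) := by
  unfold Halting; infer_instance

/-- One step of the machine on a configuration `(state, head position, tape contents)`;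
halting configurations are fixed points (so this computes `Δ(C)`). -/
def step (M : TM Q Γ) (c : Q × ℕ × (ℕ → Γ)) : Q × ℕ × (ℕ → Γ) :=
  if M.Halting c.1 then c
  else
    let r := M.δ c.1 (c.2.2 c.2.1)
    (r.1, if r.2.2 then c.2.1 + 1 else c.2.1 - 1, Function.update c.2.2 c.2.1 r.2.1)

/-- The initial configuration on input `x` of length `n`: state `q₀`, head on cell `1`,
the left endmarker in cell `1`, the input symbols `x 1, …, x n` in cells `2, …, n+1`,
and blanks beyond. -/
def init (M : TM Q Γ) (x : ℕ → Γ) (n : ℕ) : Q × ℕ × (ℕ → Γ) :=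
  (M.q₀, 1, fun r => if r = 1 then M.dollar else if r ≤ n + 1 then x (r - 1) else M.blank)

/-- The numeric encoding of a configuration in base `B` with `T` tape cells:
`val(C) = Σ_{r ≠ h} g(a_r)·B^(T−r) + (f(q)·k + g(a_h))·B^(T−h)`. -/
def val (f : Q → ℕ) (g : Γ → ℕ) (k B T : ℕ) (c : Q × ℕ × (ℕ → Γ)) : ℕ :=
  ∑ r ∈ Finset.Icc 1 T,
    (if r = c.2.1 then f c.1 * k + g (c.2.2 r) else g (c.2.2 r)) * B ^ (T - r)

/-- `B^((T−j−1)·T)`, interpreted as `0` when `j = T` (or beyond). -/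
def low (B T j : ℕ) : ℕ := if j < T then B ^ ((T - j - 1) * T) else 0

/-- Copy coin `c_copy(a, i, j)`. -/
def cCopy (g : Γ → ℕ) (B T : ℕ) (a : Γ) (i j : ℕ) : ℕ :=
  g a * B ^ (T - i) * B ^ ((T - j) * T) - g a * B ^ (T - i) * low B T j

/-- The higher-range part of a transition coin: digits `a⁻ (q a) a⁺` at positions
`i−1, i, i+1`. -/
def transUpper (f : Q → ℕ) (g : Γ → ℕ) (k B T : ℕ) (q : Q) (am a ap : Γ) (i : ℕ) : ℕ :=
  g am * B ^ (T - i + 1) + (f q * k + g a) * B ^ (T - i) + g ap * B ^ (T - i - 1)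

/-- The lower-range update `s'` of a transition coin. -/
def transLower (M : TM Q Γ) (f : Q → ℕ) (g : Γ → ℕ) (k B T : ℕ) (q : Q) (am a ap : Γ)
    (i : ℕ) : ℕ :=
  if M.Halting q then transUpper f g k B T q am a ap i
  else
    let r := M.δ q a
    if r.2.2 then
      g am * B ^ (T - i + 1) + g r.2.1 * B ^ (T - i) + (f r.1 * k + g ap) * B ^ (T - i - 1)
    else
      (f r.1 * k + g am) * B ^ (T - i + 1) + g r.2.1 * B ^ (T - i) + g ap * B ^ (T - i - 1)

/-- Transition coin `c_trans(q, a⁻, a, a⁺, i, j)`. -/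
def cTrans (M : TM Q Γ) (f : Q → ℕ) (g : Γ → ℕ) (k B T : ℕ) (q : Q) (am a ap : Γ)
    (i j : ℕ) : ℕ :=
  transUpper f g k B T q am a ap i * B ^ ((T - j) * T)
    - transLower M f g k B T q am a ap i * low B T j

/-- Left-end transition coin `c_left(q, a⁺, j)` (with `δ(q, $) = (q', $, R)`). -/
def cLeft (M : TM Q Γ) (f : Q → ℕ) (g : Γ → ℕ) (k B T : ℕ) (q : Q) (ap : Γ) (j : ℕ) : ℕ :=
  ((f q * k + g M.dollar) * B ^ (T - 1) + g ap * B ^ (T - 2)) * B ^ ((T - j) * T)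
    - (g M.dollar * B ^ (T - 1) + (f (M.δ q M.dollar).1 * k + g ap) * B ^ (T - 2)) * low B T j

/-- The coin set `𝒞` of the greedy coin change instance: all copy coins, transition
coins, and left-end transition coins with parameters in the prescribed ranges. -/
def coinSet (M : TM Q Γ) (f : Q → ℕ) (g : Γ → ℕ) (k B T : ℕ) : Set ℕ :=
  {c | (∃ a i j, 1 ≤ i ∧ i ≤ T ∧ 1 ≤ j ∧ j ≤ T ∧ c = cCopy g B T a i j) ∨
       (∃ q am a ap i j, 2 ≤ i ∧ i ≤ T - 1 ∧ 1 ≤ j ∧ j ≤ T ∧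
          c = cTrans M f g k B T q am a ap i j) ∨
       (∃ q ap j, ¬ M.Halting q ∧ 1 ≤ j ∧ j ≤ T ∧ c = cLeft M f g k B T q ap j)}

end TM

/-- The coin selected by the greedy procedure at remaining amount `w`: the largest coin
of `𝒞` not exceeding `w` (and `0` if no coin fits). -/
noncomputable def greedyPick (𝒞 : Set ℕ) (w : ℕ) : ℕ := sSup {c ∈ 𝒞 | c ≤ w}

/-- The remaining change amount after `t` steps of the greedy procedure starting from `W`. -/
noncomputable def greedyRem (𝒞 : Set ℕ) (W : ℕ) : ℕ → ℕ
  | 0 => W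
  | t + 1 => greedyRem 𝒞 W t - greedyPick 𝒞 (greedyRem 𝒞 W t)

namespace CCAux

lemma geom_bound (B : ℕ) (d : ℕ → ℕ) (hd : ∀ r, d r + 2 ≤ B) :
    ∀ n m, (∑ r ∈ Finset.Icc m (m + n), d r * B ^ (m + n - r)) + 2 ≤ B ^ (n + 1) := by
  intro n
  induction n with
  | zero =>
    intro m
    simp only [Nat.add_zero, Finset.Icc_self, Finset.sum_singleton, Nat.sub_self, pow_zero,
      mul_one, pow_one]
    simpa using hd m
  | succ n ih =>
    intro m
    have hmem : m ∉ Finset.Icc (m + 1) (m + (n + 1)) := by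
      intro hx
      rw [Finset.mem_Icc] at hx
      omega
    have hins : Finset.Icc m (m + (n + 1)) = insert m (Finset.Icc (m + 1) (m + (n + 1))) := by
      rw [Finset.Icc_add_one_left_eq_Ioc, Finset.Ioc_insert_left (by omega)]
    rw [hins, Finset.sum_insert hmem]
    have h1 : m + (n + 1) - m = n + 1 := by omega
    have h2 : m + (n + 1) = (m + 1) + n := by omega
    have ih' := ih (m + 1)
    rw [← h2] at ih'
    rw [h1]
    have h3 : (d m + 1) * B ^ (n + 1) ≤ B * B ^ (n + 1) :=
      Nat.mul_le_mul_right _ (by have := hd m; omega)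
    have h4 : B * B ^ (n + 1) = B ^ (n + 2) := by ring
    have h5 : (d m + 1) * B ^ (n + 1) = d m * B ^ (n + 1) + B ^ (n + 1) := by ring
    linarith

lemma tail_bound (B T : ℕ) (d : ℕ → ℕ) (hd : ∀ r, d r + 2 ≤ B) (m : ℕ) (hm : m ≤ T) :
    (∑ r ∈ Finset.Icc m T, d r * B ^ (T - r)) + 2 ≤ B ^ (T - m + 1) := by
  have h := geom_bound B d hd (T - m) m
  rw [show m + (T - m) = T by omega] at h
  exact h

lemma dig1 (B d e : ℕ) (hd : d + 2 ≤ B) : d * B ^ e + 2 ≤ B ^ (e + 1) := by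
  have h1 : 1 ≤ B ^ e := Nat.one_le_pow _ _ (by omega)
  have h2 : (d + 2) * B ^ e ≤ B * B ^ e := Nat.mul_le_mul_right _ hd
  have h3 : B * B ^ e = B ^ (e + 1) := by ring
  have h4 : (d + 2) * B ^ e = d * B ^ e + 2 * B ^ e := by ring
  linarith

lemma dig3 (B d1 d2 d3 e : ℕ) (h1 : d1 + 2 ≤ B) (h2 : d2 + 2 ≤ B) (h3 : d3 + 2 ≤ B) :
    d1 * B ^ (e + 2) + d2 * B ^ (e + 1) + d3 * B ^ e + 2 ≤ B ^ (e + 3) := by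
  have t3 := dig1 B d3 e h3
  have t2 : (d2 + 1) * B ^ (e + 1) ≤ B * B ^ (e + 1) := Nat.mul_le_mul_right _ (by omega)
  have t1 : (d1 + 1) * B ^ (e + 2) ≤ B * B ^ (e + 2) := Nat.mul_le_mul_right _ (by omega)
  have e2 : B * B ^ (e + 1) = B ^ (e + 2) := by ring
  have e1 : B * B ^ (e + 2) = B ^ (e + 3) := by ring
  have x2 : (d2 + 1) * B ^ (e + 1) = d2 * B ^ (e + 1) + B ^ (e + 1) := by ring
  have x1 : (d1 + 1) * B ^ (e + 2) = d1 * B ^ (e + 2) + B ^ (e + 2) := by ring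
  linarith

lemma add_le_mul_succ (a b : ℕ) (ha : 1 ≤ a) (hb : 1 ≤ b) : a + b ≤ a * b + 1 := by
  obtain ⟨a', rfl⟩ : ∃ a', a = a' + 1 := ⟨a - 1, by omega⟩
  obtain ⟨b', rfl⟩ : ∃ b', b = b' + 1 := ⟨b - 1, by omega⟩
  have h : (a' + 1) * (b' + 1) = a' * b' + a' + b' + 1 := by ring
  have h0 : 0 ≤ a' * b' := Nat.zero_le _
  linarith

lemma key (B T j j' S u P0 P Q c : ℕ)
    (hB : 4 ≤ B) (hj : j + 1 ≤ T) (hj'1 : 1 ≤ j') (hj'T : j' ≤ T)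
    (hS : S + 2 ≤ B ^ T) (hu : u + 1 ≤ B ^ T)
    (hP01 : 1 ≤ P0) (hP0B : P0 + 2 ≤ B ^ T)
    (hP1 : 1 ≤ P) (hPB : P + 2 ≤ B ^ T) (hQB : Q + 2 ≤ B ^ T)
    (hPQ : Q ≤ P ∨ B ^ 2 ≤ P)
    (hPcmp : P + 1 ≤ P0 ∨ (P = P0 ∧ Q = P0) ∨ S + 2 ≤ P)
    (hc : c = P * B ^ ((T - j') * T) - Q * TM.low B T j')
    (hcW : c ≤ S * B ^ ((T - j) * T) + u * B ^ ((T - j - 1) * T)) :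
    c ≤ P0 * B ^ ((T - j) * T) - P0 * B ^ ((T - j - 1) * T) := by
  have hB0 : 0 < B := by omega
  obtain ⟨m, hm⟩ : ∃ m, T - j = m + 1 := ⟨T - j - 1, by omega⟩
  have hmm : T - j - 1 = m := by omega
  rw [hmm, hm] at hcW ⊢
  have hpow : B ^ ((m + 1) * T) = B ^ (m * T) * B ^ T := by
    rw [add_mul, one_mul, pow_add]
  rw [hpow] at hcW ⊢
  have hY1 : 1 ≤ B ^ (m * T) := Nat.one_le_pow _ _ hB0
  have hN1 : 1 ≤ B ^ T := Nat.one_le_pow _ _ hB0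
  have hN2 : P * B ^ T ≥ B ^ T := Nat.le_mul_of_pos_left _ (by omega)
  -- the key fact  N + Q ≤ P * N + 1
  have h2' : B ^ T + Q ≤ P * B ^ T + 1 := by
    rcases hPQ with hqp | hbp
    · have hx := add_le_mul_succ P (B ^ T) hP1 hN1
      linarith
    · have hb2 : 2 ≤ B ^ 2 := by
        have : B ≤ B ^ 2 := by
          calc B = B ^ 1 := (pow_one B).symm
            _ ≤ B ^ 2 := Nat.pow_le_pow_right hB0 (by omega)
        omega
      have hx : 2 * B ^ T ≤ P * B ^ T := Nat.mul_le_mul_right _ (by omega)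
      linarith
  rcases lt_trichotomy j' j with hlt | heq | hgt
  · -- j' < j : contradiction
    exfalso
    obtain ⟨m', hm'⟩ : ∃ m', T - j' = m' + 1 := ⟨T - j' - 1, by omega⟩
    have hmm' : T - j' - 1 = m' := by omega
    have hlow : TM.low B T j' = B ^ (m' * T) := by
      unfold TM.low
      rw [if_pos (by omega : j' < T), hmm']
    have hpow' : B ^ ((T - j') * T) = B ^ (m' * T) * B ^ T := by
      rw [hm', add_mul, one_mul, pow_add]
    rw [hlow, hpow'] at hc
    have hEm : B ^ (m * T) * B ^ T ≤ B ^ (m' * T) := by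
      rw [← pow_add]
      apply Nat.pow_le_pow_right hB0
      have h1 : m + 1 ≤ m' := by omega
      calc m * T + T = (m + 1) * T := by ring
        _ ≤ m' * T := Nat.mul_le_mul_right _ h1
    -- c ≥ (N-1) * Z'
    have hsub1 : B ^ T - 1 + 1 = B ^ T := Nat.sub_add_cancel hN1
    have hcge : (B ^ T - 1) * B ^ (m' * T) ≤ c := by
      rw [hc]
      apply Nat.le_sub_of_add_le
      have e1 : (B ^ T - 1) * B ^ (m' * T) + Q * B ^ (m' * T) = (B ^ T - 1 + Q) * B ^ (m' * T) := by
        ring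
      have e2 : (B ^ T - 1 + Q) * B ^ (m' * T) ≤ (P * B ^ T) * B ^ (m' * T) :=
        Nat.mul_le_mul_right _ (by omega)
      have e3 : (P * B ^ T) * B ^ (m' * T) = P * (B ^ (m' * T) * B ^ T) := by ring
      linarith
    -- W' is small
    have b1 : (S + 2) * (B ^ (m * T) * B ^ T) ≤ B ^ T * (B ^ (m * T) * B ^ T) :=
      Nat.mul_le_mul_right _ hS
    have b1' : (S + 2) * (B ^ (m * T) * B ^ T) = S * (B ^ (m * T) * B ^ T) + 2 * (B ^ (m * T) * B ^ T) := by ring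
    have b2 : (u + 1) * B ^ (m * T) ≤ B ^ T * B ^ (m * T) := Nat.mul_le_mul_right _ hu
    have b2' : (u + 1) * B ^ (m * T) = u * B ^ (m * T) + B ^ (m * T) := by ring
    have b3 : B ^ T * B ^ (m * T) = B ^ (m * T) * B ^ T := by ring
    have b4 : (B ^ T - 1) * (B ^ (m * T) * B ^ T) + (B ^ (m * T) * B ^ T) = B ^ T * (B ^ (m * T) * B ^ T) := by
      calc (B ^ T - 1) * (B ^ (m * T) * B ^ T) + (B ^ (m * T) * B ^ T)
        = (B ^ T - 1 + 1) * (B ^ (m * T) * B ^ T) := by ring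
        _ = B ^ T * (B ^ (m * T) * B ^ T) := by rw [hsub1]
    have hWsmall : S * (B ^ (m * T) * B ^ T) + u * B ^ (m * T) + B ^ (m * T)
        ≤ (B ^ T - 1) * (B ^ (m * T) * B ^ T) := by linarith
    have hmono : (B ^ T - 1) * (B ^ (m * T) * B ^ T) ≤ (B ^ T - 1) * B ^ (m' * T) :=
      Nat.mul_le_mul_left _ hEm
    linarith
  · -- j' = j
    subst heq
    have hlow : TM.low B T j' = B ^ (m * T) := by
      unfold TM.low
      rw [if_pos (by omega : j' < T), hmm]
    have hpow2 : B ^ ((T - j') * T) = B ^ (m * T) * B ^ T := by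
      rw [hm, add_mul, one_mul, pow_add]
    rw [hlow, hpow2] at hc
    have hle : P * (B ^ (m * T) * B ^ T) ≤ c + Q * B ^ (m * T) := by
      rw [hc]; exact le_tsub_add
    have hcan : P * B ^ T ≤ S * B ^ T + u + Q := by
      have h1 : (P * B ^ T) * B ^ (m * T) ≤ (S * B ^ T + u + Q) * B ^ (m * T) := by
        have e1 : (P * B ^ T) * B ^ (m * T) = P * (B ^ (m * T) * B ^ T) := by ring
        have e2 : (S * B ^ T + u + Q) * B ^ (m * T)
            = S * (B ^ (m * T) * B ^ T) + u * B ^ (m * T) + Q * B ^ (m * T) := by ring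
        linarith [hcW, hle]
      exact Nat.le_of_mul_le_mul_right h1 (by omega)
    have hPS : P < S + 2 := by
      have h1 : P * B ^ T < (S + 2) * B ^ T := by
        have e1 : (S + 2) * B ^ T = S * B ^ T + 2 * B ^ T := by ring
        linarith
      exact lt_of_mul_lt_mul_right h1 (Nat.zero_le _)
    rcases hPcmp with hl | ⟨hP, hQ⟩ | hge
    · have hcub : c ≤ P * (B ^ (m * T) * B ^ T) := by
        rw [hc]; exact Nat.sub_le _ _
      apply Nat.le_sub_of_add_le
      have k1 : P0 * B ^ (m * T) ≤ B ^ T * B ^ (m * T) := Nat.mul_le_mul_right _ (by omega)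
      have k2 : (P + 1) * (B ^ (m * T) * B ^ T) ≤ P0 * (B ^ (m * T) * B ^ T) :=
        Nat.mul_le_mul_right _ hl
      have k3 : (P + 1) * (B ^ (m * T) * B ^ T) = P * (B ^ (m * T) * B ^ T) + B ^ (m * T) * B ^ T := by ring
      have k4 : B ^ T * B ^ (m * T) = B ^ (m * T) * B ^ T := by ring
      linarith
    · rw [hc, hP, hQ]
    · omega
  · -- j' > j
    have hcub : c ≤ P * B ^ ((T - j') * T) := by
      rw [hc]; exact Nat.sub_le _ _
    have hEm : B ^ ((T - j') * T) ≤ B ^ (m * T) :=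
      Nat.pow_le_pow_right hB0 (Nat.mul_le_mul_right _ (by omega : T - j' ≤ m))
    have hcZ : c ≤ P * B ^ (m * T) := le_trans hcub (Nat.mul_le_mul_left _ hEm)
    apply Nat.le_sub_of_add_le
    have h2'' : P + P0 ≤ P0 * B ^ T := by
      have hx := add_le_mul_succ P0 (B ^ T) hP01 hN1
      linarith
    have h3 : (P + P0) * B ^ (m * T) ≤ (P0 * B ^ T) * B ^ (m * T) :=
      Nat.mul_le_mul_right _ h2''
    have h4 : (P + P0) * B ^ (m * T) = P * B ^ (m * T) + P0 * B ^ (m * T) := by ring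
    have h5 : (P0 * B ^ T) * B ^ (m * T) = P0 * (B ^ (m * T) * B ^ T) := by ring
    linarith

end CCAux
set_option maxHeartbeats 2000000
/-- Case (3) of the simulation: at a remaining amount whose higher range holds the tape
symbols `a_i … a_T` with the state–alphabet pair at a head position `h ≥ i + 2` (so the
head is not in the neighborhood of cell `i`), and whose lower range holds a partial
update `u < B^T` all of whose base-`B` digits are at most `(s+1)·k`, the copy coin
`c_copy(a_i, i, j)` does not exceed `W'` and is the largest coin of `𝒞` not exceeding
`W'`; hence it is the coin selected by the greedy procedure. -/
theorem copy_coin_is_greedy_choice_with_head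
    {Q Γ : Type*} [Fintype Q] [Fintype Γ] [DecidableEq Q] [DecidableEq Γ]
    (M : TM Q Γ) (f : Q → ℕ) (g : Γ → ℕ) (s k B T : ℕ)
    (hs : s = Fintype.card Q) (hk : k = Fintype.card Γ)
    (hfr : ∀ q, 1 ≤ f q ∧ f q ≤ s) (hgr : ∀ a, 1 ≤ g a ∧ g a ≤ k)
    (hfi : Function.Injective f) (hgi : Function.Injective g)
    (hB : (s + 1) * k + 2 ≤ B)
    (hdollar : ∀ q, (M.δ q M.dollar).2.1 = M.dollar ∧ (M.δ q M.dollar).2.2 = true)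
    (j i h : ℕ) (hj1 : 1 ≤ j) (hjT : j ≤ T - 1) (hi1 : 1 ≤ i)
    (hih : i + 2 ≤ h) (hhT : h ≤ T - 1) (q : Q)
    (a : ℕ → Γ) (u : ℕ) (hu : u < B ^ T) (hud : ∀ r, u / B ^ r % B ≤ (s + 1) * k)
    (W' : ℕ)
    (hW' : W' = (∑ r ∈ Finset.Icc i T,
          (if r = h then f q * k + g (a r) else g (a r)) * B ^ (T - r)) * B ^ ((T - j) * T)
        + u * B ^ ((T - j - 1) * T)) :
    TM.cCopy g B T (a i) i j ≤ W' ∧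
    IsGreatest {c | c ∈ TM.coinSet M f g k B T ∧ c ≤ W'} (TM.cCopy g B T (a i) i j) ∧
    greedyPick (TM.coinSet M f g k B T) W' = TM.cCopy g B T (a i) i j := by
  subst hW'
  obtain ⟨S, hSdef⟩ : ∃ S, S = ∑ r ∈ Finset.Icc i T,
      (if r = h then f q * k + g (a r) else g (a r)) * B ^ (T - r) := ⟨_, rfl⟩
  rw [← hSdef]
  have hs1 : 1 ≤ s := by
    rw [hs]; exact Fintype.card_pos (α := Q) (h := ⟨M.q₀⟩)
  have hk1 : 1 ≤ k := by
    rw [hk]; exact Fintype.card_pos (α := Γ) (h := ⟨M.dollar⟩)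
  have hsk2 : 2 ≤ (s + 1) * k := by
    calc 2 = 2 * 1 := rfl
      _ ≤ (s + 1) * k := Nat.mul_le_mul (by omega) hk1
  have hB4 : 4 ≤ B := by linarith
  have hB0 : 0 < B := by omega
  have hiT : i + 3 ≤ T := by omega
  have hjT' : j + 1 ≤ T := by omega
  have hgB : ∀ x, g x + 2 ≤ B := by
    intro x
    have h1 := (hgr x).2
    have h2 : k ≤ (s + 1) * k := Nat.le_mul_of_pos_left _ (by omega)
    linarith
  have hfgB : ∀ p x, f p * k + g x + 2 ≤ B := by
    intro p x
    have h1 := (hfr p).2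
    have h2 := (hgr x).2
    have h3 : f p * k ≤ s * k := Nat.mul_le_mul_right _ h1
    have h4 : s * k + k = (s + 1) * k := by ring
    linarith
  have hdB : ∀ r, (if r = h then f q * k + g (a r) else g (a r)) + 2 ≤ B := by
    intro r
    split
    · exact hfgB q (a r)
    · exact hgB (a r)
  -- digit-sum bounds
  have hS2 : S + 2 ≤ B ^ (T - i + 1) := by
    rw [hSdef]
    exact CCAux.tail_bound B T _ hdB i (by omega)
  have hSN : S + 2 ≤ B ^ T := by
    have := Nat.pow_le_pow_right hB0 (show T - i + 1 ≤ T by omega)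
    linarith
  -- splitting off the leading digit
  have hins1 : Finset.Icc i T = insert i (Finset.Icc (i + 1) T) := by
    rw [Finset.Icc_add_one_left_eq_Ioc, Finset.Ioc_insert_left (by omega : i ≤ T)]
  have hnotmem1 : i ∉ Finset.Icc (i + 1) T := by
    intro hx; rw [Finset.mem_Icc] at hx; omega
  have hsplit1 : S = g (a i) * B ^ (T - i) +
      ∑ r ∈ Finset.Icc (i + 1) T, (if r = h then f q * k + g (a r) else g (a r)) * B ^ (T - r) := by
    rw [hSdef, hins1, Finset.sum_insert hnotmem1, if_neg (by omega : ¬ i = h)]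
  have hR1 : (∑ r ∈ Finset.Icc (i + 1) T,
      (if r = h then f q * k + g (a r) else g (a r)) * B ^ (T - r)) + 2 ≤ B ^ (T - i) := by
    have := CCAux.tail_bound B T _ hdB (i + 1) (by omega)
    rw [show T - (i + 1) + 1 = T - i by omega] at this
    exact this
  -- second split
  have hins2 : Finset.Icc (i + 1) T = insert (i + 1) (Finset.Icc (i + 2) T) := by
    ext x
    simp only [Finset.mem_Icc, Finset.mem_insert]
    omega
  have hnotmem2 : i + 1 ∉ Finset.Icc (i + 2) T := by
    intro hx; rw [Finset.mem_Icc] at hx; omega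
  have hsplit2 : (∑ r ∈ Finset.Icc (i + 1) T,
      (if r = h then f q * k + g (a r) else g (a r)) * B ^ (T - r))
      = g (a (i + 1)) * B ^ (T - (i + 1)) +
      ∑ r ∈ Finset.Icc (i + 2) T, (if r = h then f q * k + g (a r) else g (a r)) * B ^ (T - r) := by
    rw [hins2, Finset.sum_insert hnotmem2, if_neg (by omega : ¬ i + 1 = h)]
  have hR2 : (∑ r ∈ Finset.Icc (i + 2) T,
      (if r = h then f q * k + g (a r) else g (a r)) * B ^ (T - r)) + 2 ≤ B ^ (T - i - 1) := by
    have := CCAux.tail_bound B T _ hdB (i + 2) (by omega)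
    rw [show T - (i + 2) + 1 = T - i - 1 by omega] at this
    exact this
  -- facts about P0
  have hP01 : 1 ≤ g (a i) * B ^ (T - i) := by
    have := Nat.mul_le_mul (hgr (a i)).1 (Nat.one_le_pow (T - i) B hB0)
    simpa using this
  have hP0B : g (a i) * B ^ (T - i) + 2 ≤ B ^ T := by
    have h1 := CCAux.dig1 B (g (a i)) (T - i) (hgB (a i))
    have h2 : B ^ (T - i + 1) ≤ B ^ T := Nat.pow_le_pow_right hB0 (by omega)
    linarith
  have hP0S : g (a i) * B ^ (T - i) ≤ S := by
    rw [hsplit1]; exact Nat.le_add_right _ _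
  have hu' : u + 1 ≤ B ^ T := hu
  -- Part 1 : the copy coin fits
  have h1 : TM.cCopy g B T (a i) i j ≤
      S * B ^ ((T - j) * T) + u * B ^ ((T - j - 1) * T) := by
    calc TM.cCopy g B T (a i) i j ≤ g (a i) * B ^ (T - i) * B ^ ((T - j) * T) :=
          Nat.sub_le _ _
      _ ≤ S * B ^ ((T - j) * T) := Nat.mul_le_mul_right _ hP0S
      _ ≤ S * B ^ ((T - j) * T) + u * B ^ ((T - j - 1) * T) := Nat.le_add_right _ _
  -- membership of the copy coin
  have hmemT : TM.cCopy g B T (a i) i j ∈ TM.coinSet M f g k B T :=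
    Or.inl ⟨a i, i, j, hi1, by omega, hj1, by omega, rfl⟩
  -- the target written in subtracted form
  have htar : TM.cCopy g B T (a i) i j =
      g (a i) * B ^ (T - i) * B ^ ((T - j) * T) - g (a i) * B ^ (T - i) * B ^ ((T - j - 1) * T) := by
    unfold TM.cCopy TM.low
    rw [if_pos (by omega : j < T)]
  -- Part 2 : upper bound
  have hub : ∀ c ∈ {c | c ∈ TM.coinSet M f g k B T ∧
      c ≤ S * B ^ ((T - j) * T) + u * B ^ ((T - j - 1) * T)},
      c ≤ TM.cCopy g B T (a i) i j := by
    rintro c ⟨hmem, hcw⟩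
    rw [htar]
    simp only [TM.coinSet, Set.mem_setOf_eq] at hmem
    rcases hmem with ⟨a', i', j', hi'1, hi'T, hj'1, hj'T, rfl⟩ |
      ⟨q', am, a', ap, i', j', hi'2, hi'T1, hj'1, hj'T, rfl⟩ |
      ⟨q', ap, j', hq', hj'1, hj'T, rfl⟩
    · -- copy coin
      have hP1 : 1 ≤ g a' * B ^ (T - i') := by
        have := Nat.mul_le_mul (hgr a').1 (Nat.one_le_pow (T - i') B hB0)
        simpa using this
      have hPB : g a' * B ^ (T - i') + 2 ≤ B ^ T := by
        have h1 := CCAux.dig1 B (g a') (T - i') (hgB a')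
        have h2 : B ^ (T - i' + 1) ≤ B ^ T := Nat.pow_le_pow_right hB0 (by omega)
        linarith
      have hPcmp : g a' * B ^ (T - i') + 1 ≤ g (a i) * B ^ (T - i) ∨
          (g a' * B ^ (T - i') = g (a i) * B ^ (T - i) ∧
           g a' * B ^ (T - i') = g (a i) * B ^ (T - i)) ∨
          S + 2 ≤ g a' * B ^ (T - i') := by
        rcases lt_trichotomy i' i with hii | heqi | hii
        · refine Or.inr (Or.inr ?_)
          have e1 : B ^ (T - i + 1) ≤ B ^ (T - i') := Nat.pow_le_pow_right hB0 (by omega)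
          have e2 : B ^ (T - i') ≤ g a' * B ^ (T - i') :=
            Nat.le_mul_of_pos_left _ (by have := (hgr a').1; omega)
          linarith
        · subst heqi
          rcases lt_trichotomy (g a') (g (a i')) with hgg | hgg | hgg
          · refine Or.inl ?_
            have e1 : (g a' + 1) * B ^ (T - i') ≤ g (a i') * B ^ (T - i') :=
              Nat.mul_le_mul_right _ (by omega)
            have e2 : (g a' + 1) * B ^ (T - i') = g a' * B ^ (T - i') + B ^ (T - i') := by ring
            have e3 : 1 ≤ B ^ (T - i') := Nat.one_le_pow _ _ hB0
            linarith
          · exact Or.inr (Or.inl ⟨by rw [hgg], by rw [hgg]⟩)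
          · refine Or.inr (Or.inr ?_)
            have e1 : (g (a i') + 1) * B ^ (T - i') ≤ g a' * B ^ (T - i') :=
              Nat.mul_le_mul_right _ (by omega)
            have e2 : (g (a i') + 1) * B ^ (T - i') = g (a i') * B ^ (T - i') + B ^ (T - i') := by ring
            linarith [hsplit1, hR1]
        · refine Or.inl ?_
          have e1 := CCAux.dig1 B (g a') (T - i') (hgB a')
          have e2 : B ^ (T - i' + 1) ≤ B ^ (T - i) := Nat.pow_le_pow_right hB0 (by omega)
          have e3 : B ^ (T - i) ≤ g (a i) * B ^ (T - i) :=
            Nat.le_mul_of_pos_left _ (by have := (hgr (a i)).1; omega)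
          linarith
      exact CCAux.key B T j j' S u (g (a i) * B ^ (T - i)) (g a' * B ^ (T - i'))
        (g a' * B ^ (T - i')) _ hB4 hjT' hj'1 hj'T hSN hu' hP01 hP0B hP1 hPB hPB
        (Or.inl le_rfl) hPcmp rfl hcw
    · -- transition coin
      have hi'T : i' + 1 ≤ T := by omega
      obtain ⟨E, hE⟩ : ∃ E, T - i' = E + 1 := ⟨T - i' - 1, by omega⟩
      have hE2 : T - i' + 1 = E + 2 := by omega
      have hE1 : T - i' - 1 = E := by omega
      have hE3 : E + 3 ≤ T := by omega
      have hupEq : TM.transUpper f g k B T q' am a' ap i'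
          = g am * B ^ (E + 2) + (f q' * k + g a') * B ^ (E + 1) + g ap * B ^ E := by
        unfold TM.transUpper
        rw [hE2, hE1, hE]
      have hPB : TM.transUpper f g k B T q' am a' ap i' + 2 ≤ B ^ T := by
        rw [hupEq]
        have h1 := CCAux.dig3 B (g am) (f q' * k + g a') (g ap) E (hgB am) (hfgB q' a') (hgB ap)
        have h2 : B ^ (E + 3) ≤ B ^ T := Nat.pow_le_pow_right hB0 hE3
        linarith
      have hQB : TM.transLower M f g k B T q' am a' ap i' + 2 ≤ B ^ T := by
        unfold TM.transLower
        split
        · exact hPB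
        · dsimp only
          split
          · rw [hE2, hE1, hE]
            have h1 := CCAux.dig3 B (g am) (g (M.δ q' a').2.1) (f (M.δ q' a').1 * k + g ap) E
              (hgB am) (hgB _) (hfgB _ ap)
            have h2 : B ^ (E + 3) ≤ B ^ T := Nat.pow_le_pow_right hB0 hE3
            linarith
          · rw [hE2, hE1, hE]
            have h1 := CCAux.dig3 B (f (M.δ q' a').1 * k + g am) (g (M.δ q' a').2.1) (g ap) E
              (hfgB _ am) (hgB _) (hgB ap)
            have h2 : B ^ (E + 3) ≤ B ^ T := Nat.pow_le_pow_right hB0 hE3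
            linarith
      have hP1 : 1 ≤ TM.transUpper f g k B T q' am a' ap i' := by
        rw [hupEq]
        have e1 : 1 ≤ g ap * B ^ E := by
          have := Nat.mul_le_mul (hgr ap).1 (Nat.one_le_pow E B hB0)
          simpa using this
        linarith [Nat.zero_le (g am * B ^ (E + 2)), Nat.zero_le ((f q' * k + g a') * B ^ (E + 1))]
      have hPQ : B ^ 2 ≤ TM.transUpper f g k B T q' am a' ap i' := by
        rw [hupEq]
        have e1 : B ^ 2 ≤ B ^ (E + 2) := Nat.pow_le_pow_right hB0 (by omega)
        have e2 : B ^ (E + 2) ≤ g am * B ^ (E + 2) :=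
          Nat.le_mul_of_pos_left _ (by have := (hgr am).1; omega)
        linarith [Nat.zero_le ((f q' * k + g a') * B ^ (E + 1)), Nat.zero_le (g ap * B ^ E)]
      have hPcmp : TM.transUpper f g k B T q' am a' ap i' + 1 ≤ g (a i) * B ^ (T - i) ∨
          (TM.transUpper f g k B T q' am a' ap i' = g (a i) * B ^ (T - i) ∧
           TM.transLower M f g k B T q' am a' ap i' = g (a i) * B ^ (T - i)) ∨
          S + 2 ≤ TM.transUpper f g k B T q' am a' ap i' := by
        rcases lt_trichotomy i' (i + 1) with hii | hii | hii
        · -- i' ≤ i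
          refine Or.inr (Or.inr ?_)
          rw [hupEq]
          have e1 : B ^ (T - i + 1) ≤ B ^ (E + 2) := Nat.pow_le_pow_right hB0 (by omega)
          have e2 : B ^ (E + 2) ≤ g am * B ^ (E + 2) :=
            Nat.le_mul_of_pos_left _ (by have := (hgr am).1; omega)
          linarith [hS2, Nat.zero_le ((f q' * k + g a') * B ^ (E + 1)), Nat.zero_le (g ap * B ^ E)]
        · -- i' = i + 1
          subst hii
          have hEi : E + 2 = T - i := by omega
          have hEi1 : E + 1 = T - i - 1 := by omega
          rcases lt_trichotomy (g am) (g (a i)) with hgg | hgg | hgg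
          · refine Or.inl ?_
            rw [hupEq, ← hEi]
            have t1 : g ap * B ^ E + 2 ≤ B ^ (E + 1) := CCAux.dig1 B (g ap) E (hgB ap)
            have t2 : (f q' * k + g a' + 1) * B ^ (E + 1) ≤ B * B ^ (E + 1) :=
              Nat.mul_le_mul_right _ (by have := hfgB q' a'; omega)
            have t2' : B * B ^ (E + 1) = B ^ (E + 2) := by ring
            have t2'' : (f q' * k + g a' + 1) * B ^ (E + 1)
                = (f q' * k + g a') * B ^ (E + 1) + B ^ (E + 1) := by ring
            have t3 : (g am + 1) * B ^ (E + 2) ≤ g (a i) * B ^ (E + 2) :=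
              Nat.mul_le_mul_right _ (by omega)
            have t3' : (g am + 1) * B ^ (E + 2) = g am * B ^ (E + 2) + B ^ (E + 2) := by ring
            linarith
          · refine Or.inr (Or.inr ?_)
            rw [hupEq]
            have hBe : B ^ (T - (i + 1)) = B ^ (E + 1) := by rw [hE]
            have hBe2 : B ^ (T - i - 1) = B ^ (E + 1) := by rw [show T - i - 1 = E + 1 by omega]
            have hBti : B ^ (T - i) = B ^ (E + 2) := by rw [← hEi]
            have u1 : k + 1 ≤ f q' * k + g a' := by
              have w1 : k ≤ f q' * k := Nat.le_mul_of_pos_left _ (by have := (hfr q').1; omega)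
              have w2 := (hgr a').1
              linarith
            have u2 : (g (a (i + 1)) + 1) * B ^ (E + 1) ≤ (k + 1) * B ^ (E + 1) :=
              Nat.mul_le_mul_right _ (by have := (hgr (a (i + 1))).2; omega)
            have u3 : (k + 1) * B ^ (E + 1) ≤ (f q' * k + g a') * B ^ (E + 1) :=
              Nat.mul_le_mul_right _ u1
            have u4 : (g (a (i + 1)) + 1) * B ^ (E + 1)
                = g (a (i + 1)) * B ^ (E + 1) + B ^ (E + 1) := by ring
            rw [hBe] at hsplit2
            rw [hBe2] at hR2
            rw [hBti] at hsplit1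
            have hgg' : g am * B ^ (E + 2) = g (a i) * B ^ (E + 2) := by rw [hgg]
            linarith [Nat.zero_le (g ap * B ^ E)]
          · refine Or.inr (Or.inr ?_)
            rw [hupEq]
            have hBti : B ^ (T - i) = B ^ (E + 2) := by rw [← hEi]
            have e1 : (g (a i) + 1) * B ^ (E + 2) ≤ g am * B ^ (E + 2) :=
              Nat.mul_le_mul_right _ (by omega)
            have e2 : (g (a i) + 1) * B ^ (E + 2) = g (a i) * B ^ (E + 2) + B ^ (E + 2) := by ring
            rw [hBti] at hsplit1
            linarith [hR1, Nat.zero_le ((f q' * k + g a') * B ^ (E + 1)), Nat.zero_le (g ap * B ^ E)]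
        · -- i' ≥ i + 2
          refine Or.inl ?_
          have h1 := CCAux.dig3 B (g am) (f q' * k + g a') (g ap) E (hgB am) (hfgB q' a') (hgB ap)
          have h2 : B ^ (E + 3) ≤ B ^ (T - i) := Nat.pow_le_pow_right hB0 (by omega)
          have e3 : B ^ (T - i) ≤ g (a i) * B ^ (T - i) :=
            Nat.le_mul_of_pos_left _ (by have := (hgr (a i)).1; omega)
          rw [hupEq]
          linarith
      exact CCAux.key B T j j' S u (g (a i) * B ^ (T - i))
        (TM.transUpper f g k B T q' am a' ap i') (TM.transLower M f g k B T q' am a' ap i')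
        _ hB4 hjT' hj'1 hj'T hSN hu' hP01 hP0B hP1 hPB hQB (Or.inr hPQ) hPcmp rfl hcw
    · -- left coin
      obtain ⟨E, hE⟩ : ∃ E, T - 2 = E + 1 := ⟨T - 3, by omega⟩
      have hE2 : T - 1 = E + 2 := by omega
      have hE0 : T = E + 3 := by omega
      have hPform : (f q' * k + g M.dollar) * B ^ (T - 1) + g ap * B ^ (T - 2)
          = (f q' * k + g M.dollar) * B ^ (E + 2) + g ap * B ^ (E + 1) + 0 * B ^ E := by
        rw [hE2, hE]; ring
      have hQform : g M.dollar * B ^ (T - 1) + (f (M.δ q' M.dollar).1 * k + g ap) * B ^ (T - 2)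
          = g M.dollar * B ^ (E + 2) + (f (M.δ q' M.dollar).1 * k + g ap) * B ^ (E + 1)
            + 0 * B ^ E := by
        rw [hE2, hE]; ring
      have hPB : (f q' * k + g M.dollar) * B ^ (T - 1) + g ap * B ^ (T - 2) + 2 ≤ B ^ T := by
        rw [hPform, hE0]
        exact CCAux.dig3 B _ _ 0 E (hfgB q' M.dollar) (hgB ap) (by omega)
      have hQB : g M.dollar * B ^ (T - 1) + (f (M.δ q' M.dollar).1 * k + g ap) * B ^ (T - 2) + 2
          ≤ B ^ T := by
        rw [hQform, hE0]
        exact CCAux.dig3 B _ _ 0 E (hgB M.dollar) (hfgB _ ap) (by omega)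
      have hd1 : 1 ≤ f q' * k + g M.dollar := by
        have := (hgr M.dollar).1; omega
      have he1 : B ^ (T - 1) ≤ (f q' * k + g M.dollar) * B ^ (T - 1) :=
        Nat.le_mul_of_pos_left _ (by omega)
      have hP1 : 1 ≤ (f q' * k + g M.dollar) * B ^ (T - 1) + g ap * B ^ (T - 2) := by
        have e0 : 1 ≤ B ^ (T - 1) := Nat.one_le_pow _ _ hB0
        linarith [Nat.zero_le (g ap * B ^ (T - 2))]
      have hPQ : B ^ 2 ≤ (f q' * k + g M.dollar) * B ^ (T - 1) + g ap * B ^ (T - 2) := by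
        have e1 : B ^ 2 ≤ B ^ (T - 1) := Nat.pow_le_pow_right hB0 (by omega)
        linarith [Nat.zero_le (g ap * B ^ (T - 2))]
      have hkd : k + 1 ≤ f q' * k + g M.dollar := by
        have w1 : k ≤ f q' * k := Nat.le_mul_of_pos_left _ (by have := (hfr q').1; omega)
        have w2 := (hgr M.dollar).1
        linarith
      have hPcmp : S + 2 ≤ (f q' * k + g M.dollar) * B ^ (T - 1) + g ap * B ^ (T - 2) := by
        rcases Nat.lt_or_ge i 2 with hi2 | hi2
        · -- i = 1
          have hieq : i = 1 := by omega
          subst hieq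
          have u2 : (g (a 1) + 1) * B ^ (T - 1) ≤ (k + 1) * B ^ (T - 1) :=
            Nat.mul_le_mul_right _ (by have := (hgr (a 1)).2; omega)
          have u3 : (k + 1) * B ^ (T - 1) ≤ (f q' * k + g M.dollar) * B ^ (T - 1) :=
            Nat.mul_le_mul_right _ hkd
          have u4 : (g (a 1) + 1) * B ^ (T - 1) = g (a 1) * B ^ (T - 1) + B ^ (T - 1) := by ring
          linarith [hsplit1, hR1, Nat.zero_le (g ap * B ^ (T - 2))]
        · have e1 : B ^ (T - i + 1) ≤ B ^ (T - 1) := Nat.pow_le_pow_right hB0 (by omega)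
          linarith [hS2, Nat.zero_le (g ap * B ^ (T - 2))]
      exact CCAux.key B T j j' S u (g (a i) * B ^ (T - i))
        ((f q' * k + g M.dollar) * B ^ (T - 1) + g ap * B ^ (T - 2))
        (g M.dollar * B ^ (T - 1) + (f (M.δ q' M.dollar).1 * k + g ap) * B ^ (T - 2))
        _ hB4 hjT' hj'1 hj'T hSN hu' hP01 hP0B hP1 hPB hQB (Or.inr hPQ)
        (Or.inr (Or.inr hPcmp)) rfl hcw
  have hgreat : IsGreatest {c | c ∈ TM.coinSet M f g k B T ∧
      c ≤ S * B ^ ((T - j) * T) + u * B ^ ((T - j - 1) * T)} (TM.cCopy g B T (a i) i j) :=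
    ⟨⟨hmemT, h1⟩, hub⟩
  exact ⟨h1, hgreat, hgreat.csSup_eq⟩
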